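/- Let G be a group acting linearly on finite-dimensional k-vector spaces W and V. Given points v = (w, v₁, …, v_m) and v' = (w', v₁', …, v_m') in W ⊕ V^m, whether they can be separated by a G-invariant polynomial function on W ⊕ V^m depends only on the triple (w, w', Span_k{v₁ ⊕ v₁', …, v_m ⊕ v_m'}) ∈ W × W × Gr(V ⊕ V). More precisely: if u = (w, u₁, …, u_d) and u' = (w', u₁', …, u_d') in W ⊕ V^d satisfy Span_k{v_i ⊕ v_i' : i ≤ m} = Span_k{u_j ⊕ u_j' : j ≤ d}, then v, v' can be separated by a G-invariant polynomial if and only if u, u' can. -/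
import Mathlib


open scoped Pointwise

/-- A function `f : U → k` is a polynomial function if it lies in the `k`-subalgebra of
`U → k` generated by the linear functionals on `U`. -/
def IsPolyFun (k : Type) [Field k] {U : Type} [AddCommGroup U] [Module k U]
    (f : U → k) : Prop :=
  f ∈ Algebra.adjoin k (Set.range fun φ : U →ₗ[k] k => ⇑φ)

/-- Two points of a `G`-module `U` can be separated by polynomial invariants. -/
def CanSep (k G : Type) [Field k] [Group G] {U : Type} [AddCommGroup U] [Module k U]
    [MulAction G U] (a b : U) : Prop :=
  ∃ f : U → k, IsPolyFun k f ∧ (∀ (g : G) (x : U), f (g • x) = f x) ∧ f a ≠ f b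

/-- Precomposition with a function is an algebra hom on function algebras. -/
def compAlgHom (k : Type) [Field k] {U U' : Type} (T : U → U') :
    (U' → k) →ₐ[k] (U → k) where
  toFun g := g ∘ T
  map_one' := rfl
  map_mul' _ _ := rfl
  map_zero' := rfl
  map_add' _ _ := rfl
  commutes' _ := rfl

/-- Precomposition with a linear map preserves polynomial functions. -/
lemma IsPolyFun.comp {k : Type} [Field k] {U U' : Type} [AddCommGroup U] [Module k U]
    [AddCommGroup U'] [Module k U'] {f : U' → k} (hf : IsPolyFun k f) (T : U →ₗ[k] U') :
    IsPolyFun k (f ∘ ⇑T) := by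
  have hmem : f ∘ ⇑T ∈ (Algebra.adjoin k
      (Set.range fun φ : U' →ₗ[k] k => ⇑φ)).map (compAlgHom k ⇑T) :=
    Subalgebra.mem_map.2 ⟨f, hf, rfl⟩
  rw [AlgHom.map_adjoin] at hmem
  refine Algebra.adjoin_mono ?_ hmem
  rintro g ⟨_, ⟨φ, rfl⟩, rfl⟩
  exact ⟨φ.comp T, rfl⟩

lemma canSep_of_span_le {k G W V : Type} [Field k] [Group G]
    [AddCommGroup W] [Module k W]
    [AddCommGroup V] [Module k V]
    [DistribMulAction G W] [SMulCommClass G k W]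
    [DistribMulAction G V] [SMulCommClass G k V]
    {m d : ℕ} (w w' : W) (v v' : Fin m → V) (u u' : Fin d → V)
    (hle : Submodule.span k (Set.range fun j => (u j, u' j)) ≤
      Submodule.span k (Set.range fun i => (v i, v' i)))
    (h : CanSep k G ((w, u) : W × (Fin d → V)) (w', u')) :
    CanSep k G ((w, v) : W × (Fin m → V)) (w', v') := by
  have hc : ∀ j, ∃ c : Fin m → k, ∑ i, c i • (v i, v' i) = (u j, u' j) := by
    intro j
    have := hle (Submodule.subset_span ⟨j, rfl⟩)
    rwa [Submodule.mem_span_range_iff_exists_fun] at this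
  choose c hc using hc
  let L : (Fin m → V) →ₗ[k] (Fin d → V) :=
    { toFun := fun x j => ∑ i, c j i • x i
      map_add' := by
        intro x y; funext j
        simp [smul_add, Finset.sum_add_distrib]
      map_smul' := by
        intro a x; funext j
        simp only [Pi.smul_apply, RingHom.id_apply, Finset.smul_sum]
        exact Finset.sum_congr rfl fun i _ => smul_comm (c j i) a (x i) }
  have hLequiv : ∀ (g : G) (x : Fin m → V), L (g • x) = g • L x := by
    intro g x
    funext j
    show ∑ i, c j i • (g • x i) = g • ∑ i, c j i • x i
    rw [Finset.smul_sum]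
    exact Finset.sum_congr rfl fun i _ => (smul_comm g (c j i) (x i)).symm
  have hLv : L v = u := by
    funext j
    have h1 : (∑ i, c j i • (v i, v' i)).1 = u j := by rw [hc j]
    rw [Prod.fst_sum] at h1
    simp only [Prod.smul_fst] at h1
    exact h1
  have hLv' : L v' = u' := by
    funext j
    have h1 : (∑ i, c j i • (v i, v' i)).2 = u' j := by rw [hc j]
    rw [Prod.snd_sum] at h1
    simp only [Prod.smul_snd] at h1
    exact h1
  obtain ⟨f, hpoly, hinv, hsep⟩ := h
  refine ⟨f ∘ ⇑((LinearMap.id : W →ₗ[k] W).prodMap L), hpoly.comp _, ?_, ?_⟩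
  · intro g x
    have hT : ((LinearMap.id : W →ₗ[k] W).prodMap L) (g • x) =
        g • ((LinearMap.id : W →ₗ[k] W).prodMap L) x := by
      obtain ⟨x1, x2⟩ := x
      show (g • x1, L (g • x2)) = g • (x1, L x2)
      rw [hLequiv]
      rfl
    show f (((LinearMap.id : W →ₗ[k] W).prodMap L) (g • x)) = _
    rw [hT, hinv]
    rfl
  · show f ((w, L v)) ≠ f ((w', L v'))
    rw [hLv, hLv']
    exact hsep

/-- Whether `v = (w, v₁, …, v_m)` and `v' = (w', v₁', …, v_m')` can be separated by
polynomial invariants depends only on `(w, w', Span{v_i ⊕ v_i'})`. -/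
theorem separation_depends_only_on_span
    {k G W V : Type} [Field k] [Group G]
    [AddCommGroup W] [Module k W] [FiniteDimensional k W]
    [AddCommGroup V] [Module k V] [FiniteDimensional k V]
    [DistribMulAction G W] [SMulCommClass G k W]
    [DistribMulAction G V] [SMulCommClass G k V]
    {m d : ℕ} (w w' : W) (v v' : Fin m → V) (u u' : Fin d → V)
    (hspan : Submodule.span k (Set.range fun i => (v i, v' i)) =
      Submodule.span k (Set.range fun j => (u j, u' j))) :
    CanSep k G ((w, v) : W × (Fin m → V)) (w', v') ↔
      CanSep k G ((w, u) : W × (Fin d → V)) (w', u') := by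
  constructor
  · exact canSep_of_span_le w w' u u' v v' hspan.le
  · exact canSep_of_span_le w w' v v' u u' hspan.ge
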